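/- Let B > 0. Suppose T ∈ C²([0,B]) and ψ : [0,B]×[-1,1] → ℝ (with x ↦ ψ(x,μ) C¹ for each μ ≠ 0 and ψ bounded and measurable) satisfy T''(x) + ∫_{-1}^{1}(ψ(x,μ) − T(x)⁴)dμ = 0 and μ∂_xψ(x,μ) + ψ(x,μ) − T(x)⁴ = 0 on [0,B] for μ ≠ 0, together with T'(B) = 0 and ψ(B,μ) = ψ(B,−μ) for all μ ∈ (0,1]. Then T'(x) = ∫_{-1}^{1} μ ψ(x,μ) dμ for every x ∈ [0,B]. -/

import Mathlib

open MeasureTheory Set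

private lemma ftc_aux {x B : ℝ} (hx0 : 0 ≤ x) (hxB : x ≤ B) {f f' : ℝ → ℝ}
    (hd : ∀ y ∈ Set.Icc (0:ℝ) B, HasDerivWithinAt f (f' y) (Set.Icc 0 B) y)
    (hc : ContinuousOn f' (Set.Icc 0 B)) :
    ∫ y in x..B, f' y = f B - f x := by
  have hsub : Set.Icc x B ⊆ Set.Icc (0:ℝ) B := Set.Icc_subset_Icc hx0 le_rfl
  apply intervalIntegral.integral_eq_sub_of_hasDeriv_right_of_le hxB
  · exact fun y hy => ((hd y (hsub hy)).continuousWithinAt).mono hsub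
  · intro y hy
    have hy' : y ∈ Set.Icc (0:ℝ) B := ⟨hx0.trans hy.1.le, hy.2.le⟩
    exact ((hd y hy').hasDerivAt (Icc_mem_nhds (hx0.trans_lt hy.1) hy.2)).hasDerivWithinAt
  · exact (hc.mono hsub).intervalIntegrable_of_Icc hxB

/-- Flux relation: ∂ₓT(x) = ∫ μ ψ(x,μ) dμ for solutions of the Milne system on
[0,B] with Neumann and reflective conditions at x = B. -/
theorem stmt_7 (B : ℝ) (hB : 0 < B)
    (T T' T'' : ℝ → ℝ) (ψ ψ' : ℝ → ℝ → ℝ)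
    (hT1 : ∀ x ∈ Set.Icc (0:ℝ) B, HasDerivWithinAt T (T' x) (Set.Icc 0 B) x)
    (hT2 : ∀ x ∈ Set.Icc (0:ℝ) B, HasDerivWithinAt T' (T'' x) (Set.Icc 0 B) x)
    (hT2c : ContinuousOn T'' (Set.Icc 0 B))
    (hψreg : ∀ μ ∈ Set.Icc (-1:ℝ) 1, μ ≠ 0 →
      (∀ x ∈ Set.Icc (0:ℝ) B, HasDerivWithinAt (fun y => ψ y μ) (ψ' x μ) (Set.Icc 0 B) x) ∧
      ContinuousOn (fun x => ψ' x μ) (Set.Icc 0 B))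
    (hψmeas : Measurable (Function.uncurry ψ))
    (hψbdd : ∃ C : ℝ, ∀ x ∈ Set.Icc (0:ℝ) B, ∀ μ ∈ Set.Icc (-1:ℝ) 1, |ψ x μ| ≤ C)
    (hode : ∀ x ∈ Set.Icc (0:ℝ) B, T'' x + (∫ μ in (-1:ℝ)..1, (ψ x μ - T x ^ 4)) = 0)
    (htr : ∀ x ∈ Set.Icc (0:ℝ) B, ∀ μ ∈ Set.Icc (-1:ℝ) 1, μ ≠ 0 →
      μ * ψ' x μ + ψ x μ - T x ^ 4 = 0)
    (hTB : T' B = 0)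
    (hψB : ∀ μ ∈ Set.Ioc (0:ℝ) 1, ψ B μ = ψ B (-μ)) :
    ∀ x ∈ Set.Icc (0:ℝ) B, T' x = ∫ μ in (-1:ℝ)..1, μ * ψ x μ := by
  obtain ⟨C, hC⟩ := hψbdd
  have h11 : (-1:ℝ) ≤ 1 := by norm_num
  intro x hx
  have hx0 : (0:ℝ) ≤ x := hx.1
  have hxB : x ≤ B := hx.2
  have hsub : Icc x B ⊆ Icc (0:ℝ) B := Icc_subset_Icc hx0 le_rfl
  have hsubo : Ioc x B ⊆ Icc (0:ℝ) B := fun y hy => ⟨hx0.trans hy.1.le, hy.2⟩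
  -- measurability of sections
  have hsecμ : ∀ y : ℝ, Measurable fun μ => ψ y μ := fun y =>
    hψmeas.comp measurable_prodMk_left
  have hsecy : ∀ μ : ℝ, Measurable fun y => ψ y μ := fun μ =>
    hψmeas.comp (measurable_id.prodMk measurable_const)
  -- integrability in μ of ψ y · over [-1,1]
  have hintμ : ∀ y ∈ Icc (0:ℝ) B, IntervalIntegrable (fun μ => ψ y μ) volume (-1) 1 := by
    intro y hy
    rw [intervalIntegrable_iff, uIoc_of_le h11]
    refine Integrable.mono' (g := fun _ => C)
      (integrableOn_const measure_Ioc_lt_top.ne) ((hsecμ y).aestronglyMeasurable) ?_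
    filter_upwards [ae_restrict_mem measurableSet_Ioc] with μ hμ
    simpa using hC y hy μ (Ioc_subset_Icc_self hμ)
  -- ODE inner identity
  have hinner : ∀ y ∈ Icc (0:ℝ) B, (∫ μ in (-1:ℝ)..1, ψ y μ) = 2 * T y ^ 4 - T'' y := by
    intro y hy
    have h0 := hode y hy
    have hsplit : (∫ μ in (-1:ℝ)..1, (ψ y μ - T y ^ 4))
        = (∫ μ in (-1:ℝ)..1, ψ y μ) - 2 * T y ^ 4 := by
      rw [intervalIntegral.integral_sub (hintμ y hy) intervalIntegrable_const,
        intervalIntegral.integral_const, smul_eq_mul]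
      norm_num
    rw [hsplit] at h0
    linarith
  -- continuity facts
  have hTc : ContinuousOn T (Icc (0:ℝ) B) := fun y hy => (hT1 y hy).continuousWithinAt
  have hT4c : ContinuousOn (fun y => T y ^ 4) (Icc (0:ℝ) B) := hTc.pow 4
  have hT4int : IntervalIntegrable (fun y => T y ^ 4) volume x B :=
    (hT4c.mono hsub).intervalIntegrable_of_Icc hxB
  have hT''int : IntervalIntegrable T'' volume x B :=
    (hT2c.mono hsub).intervalIntegrable_of_Icc hxB
  set J : ℝ := ∫ y in x..B, T y ^ 4 with hJ
  -- integrability in y of ψ · μ over [x,B]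
  have hinty : ∀ μ ∈ Icc (-1:ℝ) 1, IntervalIntegrable (fun y => ψ y μ) volume x B := by
    intro μ hμ
    rw [intervalIntegrable_iff, uIoc_of_le hxB]
    refine Integrable.mono' (g := fun _ => C)
      (integrableOn_const measure_Ioc_lt_top.ne) ((hsecy μ).aestronglyMeasurable) ?_
    filter_upwards [ae_restrict_mem measurableSet_Ioc] with y hy
    simpa using hC y (hsubo hy) μ hμ
  set h : ℝ → ℝ := fun μ => ∫ y in x..B, ψ y μ with hh
  -- key pointwise identity for μ ≠ 0
  have hkey : ∀ μ ∈ Icc (-1:ℝ) 1, μ ≠ 0 → μ * ψ x μ = μ * ψ B μ - J + h μ := by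
    intro μ hμ hμ0
    obtain ⟨hd, hc⟩ := hψreg μ hμ hμ0
    have hftc : ∫ y in x..B, ψ' y μ = ψ B μ - ψ x μ := ftc_aux hx0 hxB hd hc
    have hmul : (∫ y in x..B, μ * ψ' y μ) = μ * (ψ B μ - ψ x μ) := by
      rw [intervalIntegral.integral_const_mul, hftc]
    have hcongr : (∫ y in x..B, μ * ψ' y μ) = ∫ y in x..B, (T y ^ 4 - ψ y μ) := by
      rw [intervalIntegral.integral_of_le hxB, intervalIntegral.integral_of_le hxB]
      apply setIntegral_congr_fun measurableSet_Ioc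
      intro y hy
      have := htr y (hsubo hy) μ hμ hμ0
      show μ * ψ' y μ = T y ^ 4 - ψ y μ
      linarith
    have hsplit : (∫ y in x..B, (T y ^ 4 - ψ y μ)) = J - h μ :=
      intervalIntegral.integral_sub hT4int (hinty μ hμ)
    have hfin : μ * (ψ B μ - ψ x μ) = J - h μ := by rw [← hmul, hcongr, hsplit]
    linear_combination (-1 : ℝ) * hfin
  -- integrability of μ ↦ μ * ψ B μ
  have hf1int : IntervalIntegrable (fun μ => μ * ψ B μ) volume (-1) 1 := by
    rw [intervalIntegrable_iff, uIoc_of_le h11]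
    refine Integrable.mono' (g := fun _ => C)
      (integrableOn_const measure_Ioc_lt_top.ne)
      ((measurable_id.mul (hsecμ B)).aestronglyMeasurable) ?_
    filter_upwards [ae_restrict_mem measurableSet_Ioc] with μ hμ
    have hμ' : μ ∈ Icc (-1:ℝ) 1 := Ioc_subset_Icc_self hμ
    have h1 : |μ| ≤ 1 := abs_le.2 ⟨hμ'.1, hμ'.2⟩
    have hCnn : 0 ≤ C := (abs_nonneg _).trans (hC B ⟨hB.le, le_rfl⟩ 1 ⟨by norm_num, le_rfl⟩)
    calc ‖μ * ψ B μ‖ = |μ| * |ψ B μ| := abs_mul _ _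
      _ ≤ 1 * C := mul_le_mul h1 (hC B ⟨hB.le, le_rfl⟩ μ hμ') (abs_nonneg _) zero_le_one
      _ = C := one_mul C
  -- Fubini setup
  have hFint : Integrable (fun p : ℝ × ℝ => ψ p.2 p.1)
      ((volume.restrict (Ioc (-1:ℝ) 1)).prod (volume.restrict (Ioc x B))) := by
    rw [Measure.prod_restrict]
    refine Integrable.mono' (g := fun _ => C)
      (integrableOn_const (lt_top_iff_ne_top.1 (by
        rw [Measure.prod_prod]
        exact ENNReal.mul_lt_top measure_Ioc_lt_top measure_Ioc_lt_top)))
      ((hψmeas.comp measurable_swap).aestronglyMeasurable) ?_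
    filter_upwards [ae_restrict_mem (measurableSet_Ioc.prod measurableSet_Ioc)] with p hp
    simpa using hC p.2 (hsubo hp.2) p.1 (Ioc_subset_Icc_self hp.1)
  have hheq : h = fun μ => ∫ y in Ioc x B, ψ y μ := by
    funext μ
    rw [hh]
    exact intervalIntegral.integral_of_le hxB
  have hhint' : IntervalIntegrable h volume (-1) 1 := by
    rw [intervalIntegrable_iff, uIoc_of_le h11, hheq]
    exact hFint.integral_prod_left
  -- compute ∫ h via Fubini
  have hIH : (∫ μ in (-1:ℝ)..1, h μ) = 2 * J + T' x := by
    rw [intervalIntegral.integral_of_le h11]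
    calc (∫ μ in Ioc (-1:ℝ) 1, h μ)
        = ∫ μ in Ioc (-1:ℝ) 1, ∫ y in Ioc x B, ψ y μ := by rw [hheq]
      _ = ∫ y in Ioc x B, ∫ μ in Ioc (-1:ℝ) 1, ψ y μ :=
          MeasureTheory.integral_integral_swap hFint
      _ = ∫ y in Ioc x B, (2 * T y ^ 4 - T'' y) := by
          apply setIntegral_congr_fun measurableSet_Ioc
          intro y hy
          have := hinner y (hsubo hy)
          rwa [intervalIntegral.integral_of_le h11] at this
      _ = 2 * J + T' x := by
          rw [← intervalIntegral.integral_of_le hxB,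
            intervalIntegral.integral_sub (hT4int.const_mul 2) hT''int,
            intervalIntegral.integral_const_mul,
            ftc_aux hx0 hxB hT2 hT2c, hTB]
          ring
  -- boundary symmetry: ∫ μ ψ(B,μ) dμ = 0
  have hI1 : (∫ μ in (-1:ℝ)..1, μ * ψ B μ) = 0 := by
    have hneg : (∫ μ in (-1:ℝ)..0, μ * ψ B μ) = ∫ μ in (0:ℝ)..1, -μ * ψ B (-μ) := by
      have := intervalIntegral.integral_comp_neg (fun μ => μ * ψ B μ) (a := 0) (b := 1)
      simpa using this.symm
    have hid : (∫ μ in (0:ℝ)..1, -μ * ψ B (-μ)) = ∫ μ in (0:ℝ)..1, -(μ * ψ B μ) := by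
      rw [intervalIntegral.integral_of_le (by norm_num : (0:ℝ) ≤ 1),
        intervalIntegral.integral_of_le (by norm_num : (0:ℝ) ≤ 1)]
      apply setIntegral_congr_fun measurableSet_Ioc
      intro μ hμ
      show -μ * ψ B (-μ) = -(μ * ψ B μ)
      rw [← hψB μ hμ]
      ring
    have hsub1 : IntervalIntegrable (fun μ => μ * ψ B μ) volume (-1) 0 :=
      hf1int.mono_set (by
        rw [Set.uIcc_of_le (by norm_num : (-1:ℝ) ≤ 0), Set.uIcc_of_le h11]
        exact Icc_subset_Icc le_rfl (by norm_num))
    have hsub2 : IntervalIntegrable (fun μ => μ * ψ B μ) volume 0 1 :=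
      hf1int.mono_set (by
        rw [Set.uIcc_of_le (by norm_num : (0:ℝ) ≤ 1), Set.uIcc_of_le h11]
        exact Icc_subset_Icc (by norm_num) le_rfl)
    have hadd := intervalIntegral.integral_add_adjacent_intervals hsub1 hsub2
    rw [← hadd, hneg, hid, intervalIntegral.integral_neg]
    ring
  -- assemble
  have h0ae : ∀ᵐ μ : ℝ, μ ≠ (0:ℝ) := by
    rw [ae_iff]
    simp only [not_not]
    exact measure_singleton (0:ℝ)
  have hae : ∀ᵐ μ : ℝ, μ ∈ Set.uIoc (-1:ℝ) 1 → μ * ψ x μ = μ * ψ B μ - J + h μ := by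
    filter_upwards [h0ae] with μ hμ0 hμI
    rw [Set.uIoc_of_le h11] at hμI
    exact hkey μ (Ioc_subset_Icc_self hμI) hμ0
  have hmain : (∫ μ in (-1:ℝ)..1, μ * ψ x μ)
      = ∫ μ in (-1:ℝ)..1, (μ * ψ B μ - J + h μ) := intervalIntegral.integral_congr_ae hae
  have hsplit2 : (∫ μ in (-1:ℝ)..1, (μ * ψ B μ - J + h μ))
      = (∫ μ in (-1:ℝ)..1, μ * ψ B μ) - 2 * J + (∫ μ in (-1:ℝ)..1, h μ) := by
    rw [intervalIntegral.integral_add (hf1int.sub intervalIntegrable_const) hhint',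
      intervalIntegral.integral_sub hf1int intervalIntegrable_const,
      intervalIntegral.integral_const, smul_eq_mul]
    norm_num
  rw [hmain, hsplit2, hI1, hIH]
  ring
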